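/- Let K be a field of characteristic not 2 and T a preordering of K. Then T equals the intersection of all orderings P of K containing T. -/

import Mathlib

/-- A preordering of a field `K`: additively and multiplicatively closed,
contains all squares, and does not contain `-1`. -/
def IsPreordering (K : Type*) [Field K] (T : Set K) : Prop :=
  (∀ x ∈ T, ∀ y ∈ T, x + y ∈ T) ∧ (∀ x ∈ T, ∀ y ∈ T, x * y ∈ T) ∧
    (∀ x : K, x ^ 2 ∈ T) ∧ (-1 : K) ∉ T

/-- An ordering of a field `K`: additively and multiplicatively closed,
with `P ∪ -P = K` and `P ∩ -P = {0}`. -/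
def IsOrdering (K : Type*) [Field K] (P : Set K) : Prop :=
  (∀ x ∈ P, ∀ y ∈ P, x + y ∈ P) ∧ (∀ x ∈ P, ∀ y ∈ P, x * y ∈ P) ∧
    (∀ x : K, x ∈ P ∨ -x ∈ P) ∧ (∀ x : K, x ∈ P → -x ∈ P → x = 0)

section Aux

variable {K : Type*} [Field K]

lemma IsPreordering.zero_mem {T : Set K} (hT : IsPreordering K T) : (0 : K) ∈ T := by
  simpa using hT.2.2.1 0

lemma IsPreordering.one_mem {T : Set K} (hT : IsPreordering K T) : (1 : K) ∈ T := by
  simpa using hT.2.2.1 1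

/-- Extension of a set by `-a`. -/
def extSet (T : Set K) (a : K) : Set K := {z | ∃ x ∈ T, ∃ y ∈ T, z = x - a * y}

lemma subset_extSet (T : Set K) (hT : IsPreordering K T) (a : K) : T ⊆ extSet T a :=
  fun p hp => ⟨p, hp, 0, hT.zero_mem, by ring⟩

lemma neg_mem_extSet (T : Set K) (hT : IsPreordering K T) (a : K) : -a ∈ extSet T a :=
  ⟨0, hT.zero_mem, 1, hT.one_mem, by ring⟩

lemma extSet_preordering {T : Set K} (hT : IsPreordering K T) {a : K} (ha : a ∉ T) :
    IsPreordering K (extSet T a) := by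
  obtain ⟨hadd, hmul, hsq, hneg⟩ := hT
  refine ⟨?_, ?_, ?_, ?_⟩
  · rintro _ ⟨x, hx, y, hy, rfl⟩ _ ⟨x', hx', y', hy', rfl⟩
    exact ⟨x + x', hadd _ hx _ hx', y + y', hadd _ hy _ hy', by ring⟩
  · rintro _ ⟨x, hx, y, hy, rfl⟩ _ ⟨x', hx', y', hy', rfl⟩
    exact ⟨x * x' + a ^ 2 * (y * y'),
      hadd _ (hmul _ hx _ hx') _ (hmul _ (hsq a) _ (hmul _ hy _ hy')),
      x * y' + x' * y, hadd _ (hmul _ hx _ hy') _ (hmul _ hx' _ hy), by ring⟩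
  · intro z
    exact ⟨z ^ 2, hsq z, 0, by simpa using hsq 0, by ring⟩
  · rintro ⟨x, hx, y, hy, heq⟩
    rcases eq_or_ne y 0 with rfl | hy0
    · apply hneg; rw [heq]; simpa using hx
    · apply ha
      have : a = (x + 1) * y * (y⁻¹) ^ 2 := by
        field_simp
        linear_combination heq
      rw [this]
      exact hmul _ (hmul _ (hadd _ hx _ (by simpa using hsq 1)) _ hy) _ (hsq y⁻¹)

lemma maximal_isOrdering {P : Set K} (hP : IsPreordering K P)
    (hmax : ∀ Q : Set K, IsPreordering K Q → P ⊆ Q → Q = P) : IsOrdering K P := by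
  have htot : ∀ x : K, x ∈ P ∨ -x ∈ P := by
    intro x
    by_cases hx : x ∈ P
    · exact Or.inl hx
    · right
      have h1 := extSet_preordering hP hx
      have h2 := hmax _ h1 (subset_extSet P hP x)
      rw [← h2]
      exact neg_mem_extSet P hP x
  refine ⟨hP.1, hP.2.1, htot, ?_⟩
  intro x hx hnx
  by_contra hx0
  apply hP.2.2.2
  have : (-1 : K) = x * (-x) * (x⁻¹) ^ 2 := by field_simp
  rw [this]
  exact hP.2.1 _ (hP.2.1 _ hx _ hnx) _ (hP.2.2.1 x⁻¹)

lemma exists_ordering {T : Set K} (hT : IsPreordering K T) {a : K} (ha : a ∉ T) :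
    ∃ P : Set K, IsOrdering K P ∧ T ⊆ P ∧ a ∉ P := by
  set S : Set (Set K) := {Q | IsPreordering K Q ∧ extSet T a ⊆ Q}
  have hchain : ∀ c ⊆ S, IsChain (· ⊆ ·) c → c.Nonempty →
      ∃ ub ∈ S, ∀ s ∈ c, s ⊆ ub := by
    intro c hcS hc ⟨Q0, hQ0⟩
    refine ⟨⋃₀ c, ⟨⟨?_, ?_, ?_, ?_⟩, ?_⟩, fun s hs => Set.subset_sUnion_of_mem hs⟩
    · rintro x ⟨Q1, hQ1, hx⟩ y ⟨Q2, hQ2, hy⟩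
      rcases hc.total hQ1 hQ2 with h | h
      · exact ⟨Q2, hQ2, (hcS hQ2).1.1 _ (h hx) _ hy⟩
      · exact ⟨Q1, hQ1, (hcS hQ1).1.1 _ hx _ (h hy)⟩
    · rintro x ⟨Q1, hQ1, hx⟩ y ⟨Q2, hQ2, hy⟩
      rcases hc.total hQ1 hQ2 with h | h
      · exact ⟨Q2, hQ2, (hcS hQ2).1.2.1 _ (h hx) _ hy⟩
      · exact ⟨Q1, hQ1, (hcS hQ1).1.2.1 _ hx _ (h hy)⟩
    · intro x
      exact ⟨Q0, hQ0, (hcS hQ0).1.2.2.1 x⟩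
    · rintro ⟨Q1, hQ1, hx⟩
      exact (hcS hQ1).1.2.2.2 hx
    · exact (hcS hQ0).2.trans (Set.subset_sUnion_of_mem hQ0)
  obtain ⟨P, hsub, hPm⟩ := zorn_subset_nonempty S hchain (extSet T a)
    ⟨extSet_preordering hT ha, subset_refl _⟩
  have hPS : P ∈ S := hPm.prop
  have hPord : IsOrdering K P := by
    apply maximal_isOrdering hPS.1
    intro Q hQ hPQ
    exact (hPm.eq_of_subset ⟨hQ, hPS.2.trans hPQ⟩ hPQ).symm
  refine ⟨P, hPord, (subset_extSet T hT a).trans hsub, ?_⟩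
  intro haP
  have h0 : a = 0 := hPord.2.2.2 a haP (hsub (neg_mem_extSet T hT a))
  exact ha (h0 ▸ hT.zero_mem)

end Aux

/-- Artin: a preordering is the intersection of the orderings containing it. -/
theorem preordering_eq_iInter_orderings (K : Type*) [Field K] (hK : ringChar K ≠ 2)
    (T : Set K) (hT : IsPreordering K T) :
    T = ⋂ P ∈ {P : Set K | IsOrdering K P ∧ T ⊆ P}, P := by
  apply Set.eq_of_subset_of_subset
  · intro x hx
    simp only [Set.mem_iInter, Set.mem_setOf_eq]
    exact fun P hP => hP.2 hx
  · intro x hx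
    by_contra hxT
    obtain ⟨P, hPord, hTP, hxP⟩ := exists_ordering hT hxT
    simp only [Set.mem_iInter, Set.mem_setOf_eq] at hx
    exact hxP (hx P ⟨hPord, hTP⟩)
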